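/- Let R be a (left) nearfield and n ≥ 2 an integer, and suppose there exist elements α_1, …, α_{n−1}, λ ∈ R with (α_1 + α_2 + ⋯ + α_{n−1})·λ ≠ α_1·λ + α_2·λ + ⋯ + α_{n−1}·λ. Then there exist n−1 vectors v_1, …, v_{n−1} ∈ R^n such that gen(v_1, …, v_{n−1}) = R^n. -/

import Mathlib

/-- A (left) nearfield: `(R,+)` is an abelian group, multiplication is associative
with identity `1 ≠ 0`, every nonzero element has a two-sided inverse,
`0` multiplies to `0` on both sides, and the left distributive law holds. -/
class Nearfield (R : Type*) extends AddCommGroup R, One R, Mul R where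
  mul_assoc : ∀ a b c : R, a * b * c = a * (b * c)
  one_mul : ∀ a : R, 1 * a = a
  mul_one : ∀ a : R, a * 1 = a
  one_ne_zero : (1 : R) ≠ 0
  zero_mul : ∀ a : R, 0 * a = 0
  mul_zero : ∀ a : R, a * 0 = 0
  left_distrib : ∀ a b c : R, a * (b + c) = a * b + a * c
  exists_inv : ∀ a : R, a ≠ 0 → ∃ b : R, a * b = 1 ∧ b * a = 1

variable {R : Type*} [Nearfield R] {n : ℕ}

/-- Right scalar multiplication on `R^n`: `(x · r) j = x j * r`. -/
def vsmul (x : Fin n → R) (r : R) : Fin n → R := fun j => x j * r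

/-- An `R`-subgroup of `R^n`: an additive subgroup closed under right scalar
multiplication. -/
def IsRSubgroup (S : Set (Fin n → R)) : Prop :=
  (0 : Fin n → R) ∈ S ∧ (∀ x ∈ S, ∀ y ∈ S, x + y ∈ S) ∧ (∀ x ∈ S, -x ∈ S) ∧
    ∀ x ∈ S, ∀ r : R, vsmul x r ∈ S

/-- `nvGen V` is the smallest `R`-subgroup of `R^n` containing `V`
(the intersection of all `R`-subgroups containing `V`). -/
def nvGen (V : Set (Fin n → R)) : Set (Fin n → R) :=
  { x | ∀ S : Set (Fin n → R), IsRSubgroup S → V ⊆ S → x ∈ S }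

/-- A subspace of `R^n`: an additive subgroup `N` with `(x+y)·r − x·r ∈ N`
for all `x ∈ R^n`, `y ∈ N`, `r ∈ R`. -/
def IsSubspace (N : Set (Fin n → R)) : Prop :=
  (0 : Fin n → R) ∈ N ∧ (∀ x ∈ N, ∀ y ∈ N, x + y ∈ N) ∧ (∀ x ∈ N, -x ∈ N) ∧
    ∀ x : Fin n → R, ∀ y ∈ N, ∀ r : R, vsmul (x + y) r - vsmul x r ∈ N

/-- `nvSpan V` is the smallest subspace of `R^n` containing `V`. -/
def nvSpan (V : Set (Fin n → R)) : Set (Fin n → R) :=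
  { x | ∀ N : Set (Fin n → R), IsSubspace N → V ⊆ N → x ∈ N }

/-- `nvLC V 0 = V` and `nvLC V (m+1)` is the set of all finite right `R`-linear
combinations of elements of `nvLC V m`. -/
def nvLC (V : Set (Fin n → R)) : ℕ → Set (Fin n → R)
  | 0 => V
  | m + 1 => { x | ∃ F : Finset (Fin n → R), ↑F ⊆ nvLC V m ∧
      ∃ lam : (Fin n → R) → R, x = ∑ w ∈ F, vsmul w (lam w) }

lemma vsmul_single (j : Fin n) (a r : R) :
    vsmul (Pi.single j a) r = Pi.single j (a * r) := by
  funext k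
  simp only [vsmul, Pi.single_apply]
  split
  · rfl
  · exact Nearfield.zero_mul r

lemma isRSubgroup_nvGen (V : Set (Fin n → R)) : IsRSubgroup (nvGen V) :=
  ⟨fun S hS _ => hS.1,
   fun x hx y hy S hS hV => hS.2.1 x (hx S hS hV) y (hy S hS hV),
   fun x hx S hS hV => hS.2.2.1 x (hx S hS hV),
   fun x hx r S hS hV => hS.2.2.2 x (hx S hS hV) r⟩

lemma subset_nvGen (V : Set (Fin n → R)) : V ⊆ nvGen V :=
  fun _ hx _ _ hV => hV hx

lemma sum_mem_RSubgroup {S : Set (Fin n → R)} (hS : IsRSubgroup S)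
    {ι : Type*} [DecidableEq ι] (F : Finset ι) (f : ι → Fin n → R)
    (h : ∀ i ∈ F, f i ∈ S) : (∑ i ∈ F, f i) ∈ S := by
  induction F using Finset.induction with
  | empty => simpa using hS.1
  | insert a s hx ih =>
      rw [Finset.sum_insert hx]
      exact hS.2.1 _ (h _ (by simp)) _ (ih fun i hi => h i (by simp [hi]))

/-- if `(α₁ + ⋯ + α_{n-1})·λ ≠ α₁·λ + ⋯ + α_{n-1}·λ` for some
scalars, then `R^n` is generated (as an `R`-subgroup) by `n - 1` vectors. -/
theorem gen_of_sub_maximal (hn : 2 ≤ n)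
    (hd : ∃ (α : Fin (n - 1) → R) (lam : R),
      (∑ i, α i) * lam ≠ ∑ i, α i * lam) :
    ∃ v : Fin (n - 1) → (Fin n → R), nvGen (Set.range v) = Set.univ := by
  classical
  obtain ⟨m, rfl⟩ : ∃ m, n = m + 1 := ⟨n - 1, by omega⟩
  obtain ⟨α, lam, hd⟩ := hd
  set d : R := (∑ i, α i) * lam - ∑ i, α i * lam with hdd
  have hd0 : d ≠ 0 := sub_ne_zero.mpr hd
  set v : Fin m → Fin (m + 1) → R :=
    fun i => Pi.single (Fin.castSucc i) 1 + Pi.single (Fin.last m) (α i) with hv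
  refine ⟨v, ?_⟩
  have hG := isRSubgroup_nvGen (Set.range v)
  have hvmem : ∀ i, v i ∈ nvGen (Set.range v) := fun i => subset_nvGen _ ⟨i, rfl⟩
  have hs1 : (∑ i, vsmul (v i) lam) ∈ nvGen (Set.range v) :=
    sum_mem_RSubgroup hG _ _ (fun i _ => hG.2.2.2 _ (hvmem i) lam)
  have hsum : (∑ i, v i) ∈ nvGen (Set.range v) :=
    sum_mem_RSubgroup hG _ _ (fun i _ => hvmem i)
  have hs2 : vsmul (∑ i, v i) lam ∈ nvGen (Set.range v) := hG.2.2.2 _ hsum lam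
  have hne : ∀ i : Fin m, ¬ ((Fin.last m) = Fin.castSucc i) :=
    fun i h => absurd h.symm (Fin.castSucc_lt_last i).ne
  have hdiff : vsmul (∑ i, v i) lam - (∑ i, vsmul (v i) lam)
      = Pi.single (Fin.last m) d := by
    funext k
    induction k using Fin.lastCases with
    | last =>
        simp only [Pi.sub_apply, vsmul, Finset.sum_apply, hv, Pi.add_apply,
          Pi.single_apply, hne, if_false, if_pos rfl, zero_add, hdd, if_true]
        rfl
    | cast j =>
        have hne2 : ¬ (Fin.castSucc j = Fin.last m) := (Fin.castSucc_lt_last j).ne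
        simp only [Pi.sub_apply, vsmul, Finset.sum_apply, hv, Pi.add_apply,
          Pi.single_apply, hne2, if_false, add_zero, Fin.castSucc_inj, ite_mul,
          Nearfield.one_mul, Nearfield.zero_mul, Finset.sum_ite_eq,
          Finset.mem_univ, if_true, sub_self]
  have hDmem : Pi.single (Fin.last m) d ∈ nvGen (Set.range v) := by
    rw [← hdiff, sub_eq_add_neg]
    exact hG.2.1 _ hs2 _ (hG.2.2.1 _ hs1)
  obtain ⟨b, hb1, _⟩ := Nearfield.exists_inv d hd0
  have hlast1 : Pi.single (Fin.last m) (1 : R) ∈ nvGen (Set.range v) := by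
    have := hG.2.2.2 _ hDmem b
    rwa [vsmul_single, hb1] at this
  have hlast : ∀ r : R, Pi.single (Fin.last m) r ∈ nvGen (Set.range v) := by
    intro r
    have := hG.2.2.2 _ hlast1 r
    rwa [vsmul_single, Nearfield.one_mul] at this
  have hcast : ∀ (i : Fin m) (r : R),
      Pi.single (Fin.castSucc i) r ∈ nvGen (Set.range v) := by
    intro i r
    have h1 : Pi.single (Fin.castSucc i) (1 : R) ∈ nvGen (Set.range v) := by
      have hmem := hG.2.1 _ (hvmem i) _ (hG.2.2.1 _ (hlast (α i)))
      have : v i + -(Pi.single (Fin.last m) (α i))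
          = Pi.single (Fin.castSucc i) (1 : R) := by
        rw [hv]; exact add_neg_cancel_right _ _
      rwa [this] at hmem
    have := hG.2.2.2 _ h1 r
    rwa [vsmul_single, Nearfield.one_mul] at this
  have hsingle : ∀ (k : Fin (m + 1)) (r : R),
      Pi.single k r ∈ nvGen (Set.range v) := by
    intro k
    induction k using Fin.lastCases with
    | last => exact hlast
    | cast j => exact hcast j
  apply Set.eq_univ_of_forall
  intro x
  have hx : x = ∑ k, Pi.single k (x k) := (Finset.univ_sum_single x).symm
  rw [hx]
  exact sum_mem_RSubgroup hG _ _ (fun k _ => hsingle k (x k))
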